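/- Let T be a Borel automorphism of a standard Borel space (X, 𝓑) and let F₁, …, Fₙ be Borel subsets of X. Then there exists a smooth Borel automorphism S of X (i.e. there exists a Borel set A ⊆ X which intersects every S-orbit in exactly one point) such that S(Fᵢ) = T(Fᵢ) for every i = 1, …, n. In other words, the smooth Borel automorphisms are dense in Aut(X, 𝓑) with respect to the weak topology p. -/

import Mathlib

open MeasureTheory Set
open Classical

section Helpers

variable {X : Type*} [MeasurableSpace X]

/-- measurability by gluing along a countable cover -/
lemma measurable_of_cover {I : Type*} [Countable I] {u : I → Set X}
    (hm : ∀ i, MeasurableSet (u i)) (hc : ∀ x, ∃ i, x ∈ u i)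
    {f : X → X} (g : I → X → X) (hg : ∀ i, Measurable (g i))
    (hfg : ∀ i, ∀ x ∈ u i, f x = g i x) : Measurable f := by
  intro B hB
  have : f ⁻¹' B = ⋃ i, u i ∩ g i ⁻¹' B := by
    ext x
    constructor
    · intro hx
      obtain ⟨i, hi⟩ := hc x
      exact mem_iUnion.2 ⟨i, hi, by simpa [hfg i x hi] using hx⟩
    · intro hx
      obtain ⟨i, hi, hgi⟩ := mem_iUnion.1 hx
      simpa [Set.mem_preimage, hfg i x hi] using hgi
  rw [this]
  exact MeasurableSet.iUnion fun i => (hm i).inter (hg i hB)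

/-- gluing countably many partial bijections into a measurable equivalence -/
lemma glue_equiv {I : Type*} [Countable I] (u v : I → Set X)
    (hum : ∀ i, MeasurableSet (u i)) (hvm : ∀ i, MeasurableSet (v i))
    (hud : ∀ i j, i ≠ j → ∀ x, x ∈ u i → x ∈ u j → False)
    (hvd : ∀ i j, i ≠ j → ∀ x, x ∈ v i → x ∈ v j → False)
    (huc : ∀ x, ∃ i, x ∈ u i) (hvc : ∀ y, ∃ i, y ∈ v i)
    (g h : I → X → X) (hg : ∀ i, Measurable (g i)) (hh : ∀ i, Measurable (h i))
    (hgv : ∀ i, ∀ x ∈ u i, g i x ∈ v i) (hhu : ∀ i, ∀ y ∈ v i, h i y ∈ u i)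
    (hgh : ∀ i, ∀ x ∈ u i, h i (g i x) = x) (hhg : ∀ i, ∀ y ∈ v i, g i (h i y) = y) :
    ∃ S : X ≃ᵐ X, (∀ i, ∀ x ∈ u i, S x = g i x) ∧ (∀ i, S '' u i = v i) := by
  classical
  have idxU : ∀ x : X, ∃ i, x ∈ u i := huc
  set iU : X → I := fun x => (huc x).choose with hiU
  have hiUmem : ∀ x, x ∈ u (iU x) := fun x => (huc x).choose_spec
  have hiUuniq : ∀ x i, x ∈ u i → iU x = i := by
    intro x i hx
    by_contra hne
    exact hud _ _ hne x (hiUmem x) hx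
  set iV : X → I := fun y => (hvc y).choose with hiV
  have hiVmem : ∀ y, y ∈ v (iV y) := fun y => (hvc y).choose_spec
  have hiVuniq : ∀ y i, y ∈ v i → iV y = i := by
    intro y i hy
    by_contra hne
    exact hvd _ _ hne y (hiVmem y) hy
  set f : X → X := fun x => g (iU x) x with hf
  set f' : X → X := fun y => h (iV y) y with hf'
  have hfspec : ∀ i, ∀ x ∈ u i, f x = g i x := by
    intro i x hx; simp only [hf]; rw [hiUuniq x i hx]
  have hf'spec : ∀ i, ∀ y ∈ v i, f' y = h i y := by
    intro i y hy; simp only [hf']; rw [hiVuniq y i hy]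
  have hleft : ∀ x, f' (f x) = x := by
    intro x
    have hx := hiUmem x
    have h1 : f x = g (iU x) x := rfl
    have h2 : f x ∈ v (iU x) := h1 ▸ hgv _ x hx
    rw [hf'spec _ _ h2, h1, hgh _ x hx]
  have hright : ∀ y, f (f' y) = y := by
    intro y
    have hy := hiVmem y
    have h1 : f' y = h (iV y) y := rfl
    have h2 : f' y ∈ u (iV y) := h1 ▸ hhu _ y hy
    rw [hfspec _ _ h2, h1, hhg _ y hy]
  have hfm : Measurable f := measurable_of_cover hum huc g hg hfspec
  have hf'm : Measurable f' := measurable_of_cover hvm hvc h hh hf'spec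
  refine ⟨⟨⟨f, f', hleft, hright⟩, hfm, hf'm⟩, hfspec, ?_⟩
  intro i
  apply Set.Subset.antisymm
  · rintro y ⟨x, hx, rfl⟩
    have : f x = g i x := hfspec i x hx
    simpa [MeasurableEquiv.coe_mk, this] using hgv i x hx
  · intro y hy
    refine ⟨h i y, hhu i y hy, ?_⟩
    show f (h i y) = y
    rw [hfspec i _ (hhu i y hy), hhg i y hy]

variable [MeasurableSingletonClass X]

/-- a function equal to the identity off a countable set is measurable -/
lemma measurable_of_eq_id_off_countable {s : Set X} (hs : s.Countable) {f : X → X}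
    (hf : ∀ x ∉ s, f x = x) : Measurable f := by
  intro B hB
  have : f ⁻¹' B = (f ⁻¹' B ∩ s) ∪ (B \ s) := by
    ext x
    constructor
    · intro hx
      by_cases hxs : x ∈ s
      · exact Or.inl ⟨hx, hxs⟩
      · exact Or.inr ⟨by rwa [← hf x hxs], hxs⟩
    · rintro (⟨hx, _⟩ | ⟨hxB, hxs⟩)
      · exact hx
      · simpa [Set.mem_preimage, hf x hxs] using hxB
  rw [this]
  exact ((hs.mono inter_subset_right).measurableSet).union (hB.diff hs.measurableSet)

/-- extending a measurable function on a subtype by the identity -/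
lemma measurable_extend_id {s : Set X} [∀ x, Decidable (x ∈ s)] (hs : MeasurableSet s) {e : s → X} (he : Measurable e) :
    Measurable (fun x => if h : x ∈ s then e ⟨x, h⟩ else x) := by
  intro B hB
  have : (fun x => if h : x ∈ s then e ⟨x, h⟩ else x) ⁻¹' B
      = (Subtype.val '' (e ⁻¹' B)) ∪ (B \ s) := by
    ext x
    by_cases hxs : x ∈ s
    · rw [Set.mem_preimage, dif_pos hxs]
      constructor
      · intro hx; exact Or.inl ⟨⟨x, hxs⟩, hx, rfl⟩
      · rintro (⟨⟨y, hy⟩, hyB, rfl⟩ | ⟨_, hxs'⟩)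
        · exact hyB
        · exact absurd hxs hxs'
    · rw [Set.mem_preimage, dif_neg hxs]
      constructor
      · intro hx; exact Or.inr ⟨hx, hxs⟩
      · rintro (⟨⟨y, hy⟩, _, rfl⟩ | ⟨hxB, _⟩)
        · exact absurd hy hxs
        · exact hxB
  rw [this]
  exact (hs.subtype_image (he hB)).union (hB.diff hs)

/-- extending a measurable function on a subtype by a constant -/
lemma measurable_extend_const {Y : Type*} [MeasurableSpace Y] {s : Set X} [∀ x, Decidable (x ∈ s)] (hs : MeasurableSet s)
    {e : s → Y} (he : Measurable e) (y₀ : Y) :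
    Measurable (fun x => if h : x ∈ s then e ⟨x, h⟩ else y₀) := by
  intro B hB
  by_cases hy0 : y₀ ∈ B
  · have : (fun x => if h : x ∈ s then e ⟨x, h⟩ else y₀) ⁻¹' B
        = (Subtype.val '' (e ⁻¹' B)) ∪ sᶜ := by
      ext x
      by_cases hxs : x ∈ s
      · rw [Set.mem_preimage, dif_pos hxs]
        constructor
        · intro hx; exact Or.inl ⟨⟨x, hxs⟩, hx, rfl⟩
        · rintro (⟨⟨y, hy⟩, hyB, rfl⟩ | hxc)
          · exact hyB
          · exact absurd hxs hxc
      · rw [Set.mem_preimage, dif_neg hxs]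
        exact ⟨fun _ => Or.inr hxs, fun _ => hy0⟩
    rw [this]
    exact (hs.subtype_image (he hB)).union hs.compl
  · have : (fun x => if h : x ∈ s then e ⟨x, h⟩ else y₀) ⁻¹' B
        = (Subtype.val '' (e ⁻¹' B)) := by
      ext x
      by_cases hxs : x ∈ s
      · rw [Set.mem_preimage, dif_pos hxs]
        constructor
        · intro hx; exact ⟨⟨x, hxs⟩, hx, rfl⟩
        · rintro ⟨⟨y, hy⟩, hyB, rfl⟩; exact hyB
      · rw [Set.mem_preimage, dif_neg hxs]
        constructor
        · intro hx; exact absurd hx hy0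
        · rintro ⟨⟨y, hy⟩, _, rfl⟩; exact absurd hy hxs
    rw [this]
    exact hs.subtype_image (he hB)

end Helpers



lemma smooth_of_invariant_graded {X : Type*} [MeasurableSpace X] [MeasurableSingletonClass X] (S : X ≃ᵐ X) (V : Set X) (L : ℤ → Set X)
    (hVc : V.Countable)
    (hLm : ∀ k, MeasurableSet (L k))
    (hLV : ∀ k, ∀ x ∈ L k, x ∉ V)
    (hLd : ∀ k k', k ≠ k' → ∀ x, x ∈ L k → x ∈ L k' → False)
    (hcov : ∀ x, x ∉ V → ∃ k, x ∈ L k)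
    (hSV : ∀ x ∈ V, S x ∈ V) (hSV' : ∀ x ∈ V, S.symm x ∈ V)
    (hSL : ∀ k, ∀ x ∈ L k, S x ∈ L (k + 1)) (hSL' : ∀ k, ∀ x ∈ L k, S.symm x ∈ L (k - 1)) :
    ∃ Aset : Set X, MeasurableSet Aset ∧
      ∀ x : X, ∃! y : X, y ∈ Aset ∧ ∃ k : ℤ, (S.toEquiv ^ k) x = y := by
  have hpow_succ : ∀ (k : ℤ) (x : X), (S.toEquiv ^ (k + 1)) x = (S.toEquiv ^ k) (S x) := by
    intro k x
    rw [zpow_add_one, Equiv.Perm.mul_apply]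
    rfl
  have hpow_pred : ∀ (k : ℤ) (x : X), (S.toEquiv ^ (k - 1)) x = (S.toEquiv ^ k) (S.symm x) := by
    intro k x
    rw [zpow_sub_one, Equiv.Perm.mul_apply, Equiv.Perm.inv_def]
    rfl
  have hcancel : ∀ (k : ℤ) (x : X), (S.toEquiv ^ (-k)) ((S.toEquiv ^ k) x) = x := by
    intro k x
    rw [← Equiv.Perm.mul_apply, ← zpow_add, neg_add_cancel, zpow_zero, Equiv.Perm.coe_one, id]
  have hzV : ∀ (k : ℤ), ∀ x ∈ V, (S.toEquiv ^ k) x ∈ V := by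
    intro k
    induction k using Int.induction_on with
    | zero => intro x hx; simpa using hx
    | succ k ih => intro x hx; rw [hpow_succ]; exact ih _ (hSV x hx)
    | pred k ih =>
        intro x hx
        have h1 : (-(k : ℤ) - 1) = (-(k : ℤ)) - 1 := by ring
        rw [h1, hpow_pred]
        exact ih _ (hSV' x hx)
  have hzL : ∀ (k m : ℤ), ∀ x ∈ L m, (S.toEquiv ^ k) x ∈ L (m + k) := by
    intro k
    induction k using Int.induction_on with
    | zero => intro m x hx; simpa using hx
    | succ k ih =>
        intro m x hx
        rw [hpow_succ]
        have := ih (m + 1) (S x) (hSL m x hx)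
        have h2 : m + 1 + k = m + (k + 1) := by ring
        rwa [h2] at this
    | pred k ih =>
        intro m x hx
        have h1 : (-(k : ℤ) - 1) = (-(k : ℤ)) - 1 := by ring
        rw [h1, hpow_pred]
        have := ih (m - 1) (S.symm x) (hSL' m x hx)
        have h2 : m - 1 + -(k : ℤ) = m + (-(k : ℤ) - 1) := by ring
        rwa [h2] at this
  -- the orbit equivalence relation
  let st : Setoid X := ⟨fun x y => ∃ k : ℤ, (S.toEquiv ^ k) x = y, by
    constructor
    · intro x; exact ⟨0, by simp⟩
    · rintro x y ⟨k, rfl⟩; exact ⟨-k, hcancel k x⟩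
    · rintro x y z ⟨k, rfl⟩ ⟨l, rfl⟩
      exact ⟨l + k, by rw [zpow_add, Equiv.Perm.mul_apply]⟩⟩
  let rep : X → X := fun x => (Quotient.mk st x).out
  have hrep : ∀ x, ∃ k : ℤ, (S.toEquiv ^ k) (rep x) = x := by
    intro x
    exact Quotient.exact (Quotient.out_eq (Quotient.mk st x))
  have hrep_congr : ∀ x y, (∃ k : ℤ, (S.toEquiv ^ k) x = y) → rep x = rep y := by
    intro x y h
    show (Quotient.mk st x).out = (Quotient.mk st y).out
    congr 1
    exact Quotient.sound h
  have hrel_rep : ∀ z, ∃ j : ℤ, (S.toEquiv ^ j) z = rep z := by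
    intro z
    obtain ⟨j, hj⟩ := hrep z
    refine ⟨-j, ?_⟩
    nth_rewrite 1 [← hj]
    rw [hcancel]
  have hrepV : ∀ x ∈ V, rep x ∈ V := by
    intro x hx
    obtain ⟨k, hk⟩ := hrep x
    have h2 : (S.toEquiv ^ (-k)) x = rep x := by nth_rewrite 1 [← hk]; rw [hcancel]
    rw [← h2]
    exact hzV _ x hx
  refine ⟨rep '' V ∪ L 0, ((hVc.image rep).measurableSet).union (hLm 0), ?_⟩
  intro x
  by_cases hxV : x ∈ V
  · refine ⟨rep x, ⟨Or.inl ⟨x, hxV, rfl⟩, ?_⟩, ?_⟩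
    · obtain ⟨k, hk⟩ := hrep x
      refine ⟨-k, ?_⟩
      nth_rewrite 1 [← hk]
      rw [hcancel]
    · rintro y ⟨hyA, k, rfl⟩
      have hyV : (S.toEquiv ^ k) x ∈ V := hzV k x hxV
      rcases hyA with hrange | hL0
      · obtain ⟨z, hzV', hz⟩ := hrange
        obtain ⟨j, hj⟩ := hrel_rep z
        have e1 : rep z = rep x := by
          apply hrep_congr
          exact ⟨-k + j, by rw [zpow_add, Equiv.Perm.mul_apply, hj, hz, hcancel]⟩
        rw [← hz, e1]
      · exact absurd hyV (hLV 0 _ hL0)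
  · obtain ⟨m, hm⟩ := hcov x hxV
    refine ⟨(S.toEquiv ^ (-m)) x, ⟨Or.inr ?_, ⟨-m, rfl⟩⟩, ?_⟩
    · have := hzL (-m) m x hm
      rwa [add_neg_cancel] at this
    · rintro y ⟨hyA, k, rfl⟩
      have hyL : (S.toEquiv ^ k) x ∈ L (m + k) := hzL k m x hm
      have hyV : (S.toEquiv ^ k) x ∉ V := by
        intro hv
        have := hzV (-k) _ hv
        rw [hcancel] at this
        exact hxV this
      rcases hyA with hrange | hL0
      · obtain ⟨z, hzV', hz⟩ := hrange
        rw [← hz] at hyV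
        exact absurd (hrepV z hzV') hyV
      · have hk : m + k = 0 := by
          by_contra hne
          exact hLd _ _ hne _ hyL hL0
        have : k = -m := by omega
        rw [this]

section CoreAux

lemma equiv_of_countable_infinite {X : Type*} {s t : Set X}
    (hs : s.Countable) (hsi : s.Infinite) (ht : t.Countable) (hti : t.Infinite) :
    Nonempty (s ≃ t) := by
  haveI := hs.to_subtype
  haveI := hsi.to_subtype
  haveI := ht.to_subtype
  haveI := hti.to_subtype
  obtain ⟨d1⟩ := nonempty_denumerable s
  obtain ⟨d2⟩ := nonempty_denumerable t
  exact ⟨(@Denumerable.eqv s d1).trans (@Denumerable.eqv t d2).symm⟩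

lemma not_countable_sections {k : ℤ} : ¬({z : ℝ × ℤ | z.2 = k}).Countable := by
  intro h
  have hsub : (univ : Set ℝ) ⊆ Prod.fst '' {z : ℝ × ℤ | z.2 = k} := by
    intro r _
    exact ⟨(r, k), rfl, rfl⟩
  exact Cardinal.not_countable_real ((h.image Prod.fst).mono hsub)

lemma not_countable_RZ : ¬Countable (ℝ × ℤ) := by
  intro h
  have : Countable ℝ := Function.Injective.countable
    (f := fun r : ℝ => ((r, 0) : ℝ × ℤ)) (fun a b hab => congrArg Prod.fst hab)
  exact Cardinal.not_countable_real (Set.countable_univ)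

end CoreAux

lemma smooth_core {X : Type*} [MeasurableSpace X] [StandardBorelSpace X]
    {P : Type*} [Finite P] (A B : P → Set X)
    (hAm : ∀ p, MeasurableSet (A p)) (hBm : ∀ p, MeasurableSet (B p))
    (hAd : ∀ p q, p ≠ q → ∀ x, x ∈ A p → x ∈ A q → False)
    (hBd : ∀ p q, p ≠ q → ∀ x, x ∈ B p → x ∈ B q → False)
    (hAc : ∀ x, ∃ p, x ∈ A p) (hBc : ∀ x, ∃ p, x ∈ B p)
    (heq : ∀ p, Nonempty ((A p : Set X) ≃ (B p : Set X))) :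
    ∃ S : X ≃ᵐ X,
      (∃ Aset : Set X, MeasurableSet Aset ∧
        ∀ x : X, ∃! y : X, y ∈ Aset ∧ ∃ k : ℤ, (S.toEquiv ^ k) x = y) ∧
      (∀ p, S '' A p = B p) := by
  classical
  haveI : Countable P := Finite.to_countable
  -- anchors in each cell A p ∩ B q
  have hN : ∀ p q : P, ∃ N : Set X, N ⊆ A p ∩ B q ∧ N.Countable ∧
      ((A p ∩ B q).Countable → N = A p ∩ B q) ∧ (¬(A p ∩ B q).Countable → N.Infinite) := by
    intro p q
    by_cases h : (A p ∩ B q).Countable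
    · exact ⟨A p ∩ B q, Subset.rfl, h, fun _ => rfl, fun h' => absurd h h'⟩
    · have hinf : (A p ∩ B q).Infinite := fun hfin => h hfin.countable
      refine ⟨Set.range (fun n => (Set.Infinite.natEmbedding _ hinf n : X)), ?_, countable_range _,
        fun hc => absurd hc h, fun _ => ?_⟩
      · rintro x ⟨n, rfl⟩; exact (Set.Infinite.natEmbedding _ hinf n).2
      · apply Set.infinite_range_of_injective
        intro a b hab
        exact (Set.Infinite.natEmbedding _ hinf).injective (Subtype.ext hab)
  choose N hN1 hN2 hN3 hN4 using hN
  -- the countable absorbing set V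
  set V : Set X := ⋃ p, ⋃ q, N p q with hVdef
  have hVc : V.Countable := countable_iUnion fun p => countable_iUnion fun q => hN2 p q
  have hVm : MeasurableSet V := hVc.measurableSet
  have hNV : ∀ p q, N p q ⊆ V := fun p q x hx => mem_iUnion.2 ⟨p, mem_iUnion.2 ⟨q, hx⟩⟩
  have hcell_subV : ∀ p q, (A p ∩ B q).Countable → A p ∩ B q ⊆ V := by
    intro p q h
    rw [← hN3 p q h]
    exact hNV p q
  -- countability transfer between A p and B p
  have hAB_count : ∀ p, (A p).Countable ↔ (B p).Countable := by
    intro p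
    obtain ⟨e⟩ := heq p
    constructor
    · intro h
      haveI := h.to_subtype
      haveI : Countable (B p : Set X) := Countable.of_equiv _ e
      exact Set.countable_coe_iff.1 this
    · intro h
      haveI := h.to_subtype
      haveI : Countable (A p : Set X) := Countable.of_equiv _ e.symm
      exact Set.countable_coe_iff.1 this
  have hAsubV : ∀ p, (A p).Countable → A p ⊆ V := by
    intro p h x hx
    obtain ⟨q, hq⟩ := hBc x
    exact hcell_subV p q (h.mono inter_subset_left) ⟨hx, hq⟩
  have hBsubV : ∀ p, (B p).Countable → B p ⊆ V := by
    intro p h x hx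
    obtain ⟨q, hq⟩ := hAc x
    exact hcell_subV q p (h.mono inter_subset_right) ⟨hq, hx⟩
  have hAV_inf : ∀ p, ¬(A p).Countable → (A p ∩ V).Infinite := by
    intro p h
    have hex : ∃ q, ¬(A p ∩ B q).Countable := by
      by_contra hq
      push_neg at hq
      apply h
      have hsub : A p ⊆ ⋃ q, A p ∩ B q := by
        intro x hx
        obtain ⟨q, hq⟩ := hBc x
        exact mem_iUnion.2 ⟨q, hx, hq⟩
      exact (countable_iUnion hq).mono hsub
    obtain ⟨q, hq⟩ := hex
    refine (hN4 p q hq).mono ?_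
    intro x hx
    exact ⟨(hN1 p q hx).1, hNV p q hx⟩
  have hBV_inf : ∀ p, ¬(B p).Countable → (B p ∩ V).Infinite := by
    intro p h
    have hex : ∃ q, ¬(A q ∩ B p).Countable := by
      by_contra hq
      push_neg at hq
      apply h
      have hsub : B p ⊆ ⋃ q, A q ∩ B p := by
        intro x hx
        obtain ⟨q, hq⟩ := hAc x
        exact mem_iUnion.2 ⟨q, hq, hx⟩
      exact (countable_iUnion hq).mono hsub
    obtain ⟨q, hq⟩ := hex
    refine (hN4 q p hq).mono ?_
    intro x hx
    exact ⟨(hN1 q p hx).2, hNV q p hx⟩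
  -- equivalences between the countable parts
  have hVpiece : ∀ p, Nonempty ((A p ∩ V : Set X) ≃ (B p ∩ V : Set X)) := by
    intro p
    by_cases h : (A p).Countable
    · have h1 : A p ∩ V = A p := inter_eq_left.2 (hAsubV p h)
      have h2 : B p ∩ V = B p := inter_eq_left.2 (hBsubV p ((hAB_count p).1 h))
      rw [h1, h2]
      exact heq p
    · exact equiv_of_countable_infinite (hVc.mono inter_subset_right) (hAV_inf p h)
        (hVc.mono inter_subset_right) (hBV_inf p fun hb => h ((hAB_count p).2 hb))
  -- parametrizations of the uncountable cells
  have hrho : ∀ p q : P, ∃ ρ : X → ℝ × ℤ, Measurable ρ ∧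
      (¬(A p ∩ B q).Countable → Set.BijOn ρ ((A p ∩ B q) \ V) Set.univ) := by
    intro p q
    by_cases h : (A p ∩ B q).Countable
    · exact ⟨fun _ => (0, 0), measurable_const, fun h' => absurd h h'⟩
    · have hm : MeasurableSet ((A p ∩ B q) \ V) := ((hAm p).inter (hBm q)).diff hVm
      have hnc : ¬Countable (↥((A p ∩ B q) \ V)) := by
        rw [Set.countable_coe_iff]
        intro hc
        apply h
        have hsub : A p ∩ B q ⊆ ((A p ∩ B q) \ V) ∪ V := by
          intro x hx
          by_cases hxV : x ∈ V
          · exact Or.inr hxV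
          · exact Or.inl ⟨hx, hxV⟩
        exact (hc.union hVc).mono hsub
      haveI : StandardBorelSpace (↥((A p ∩ B q) \ V)) := hm.standardBorel
      have θ := PolishSpace.measurableEquivOfNotCountable hnc not_countable_RZ
      refine ⟨fun x => if hx : x ∈ (A p ∩ B q) \ V then θ ⟨x, hx⟩ else (0, 0),
        measurable_extend_const hm θ.measurable _, fun _ => ⟨?_, ?_, ?_⟩⟩
      · intro x _
        exact mem_univ _
      · intro x hx y hy hxy
        beta_reduce at hxy
        rw [dif_pos hx, dif_pos hy] at hxy
        exact congrArg Subtype.val (θ.injective hxy)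
      · intro z _
        refine ⟨(θ.symm z : X), (θ.symm z).2, ?_⟩
        beta_reduce
        rw [dif_pos (θ.symm z).2]
        have h1 : (⟨(θ.symm z : X), (θ.symm z).2⟩ : ↥((A p ∩ B q) \ V)) = θ.symm z :=
          Subtype.ext rfl
        rw [h1, θ.apply_symm_apply]
  choose ρ hρm hρbij using hrho
  -- the level sets
  obtain ⟨L, hLm, hLmem⟩ : ∃ L : ℤ → Set X, (∀ k, MeasurableSet (L k)) ∧
      (∀ k x, x ∈ L k ↔ ∃ p q, (x ∈ A p ∩ B q ∧ x ∉ V) ∧ (ρ p q x).2 = k) := by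
    refine ⟨fun k => ⋃ p, ⋃ q, (((A p ∩ B q) \ V) ∩ ρ p q ⁻¹' {z : ℝ × ℤ | z.2 = k}), ?_, ?_⟩
    · intro k
      refine MeasurableSet.iUnion fun p => MeasurableSet.iUnion fun q => ?_
      exact (((hAm p).inter (hBm q)).diff hVm).inter
        ((hρm p q) ((measurableSet_singleton k).preimage measurable_snd))
    · intro k x
      simp only [mem_iUnion, mem_inter_iff, mem_diff, mem_preimage, mem_setOf_eq]
  have hLnotV : ∀ k, ∀ x ∈ L k, x ∉ V := by
    intro k x hx
    obtain ⟨p, q, ⟨⟨_, hv⟩, _⟩⟩ := (hLmem k x).1 hx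
    exact hv
  have hLd : ∀ k k', k ≠ k' → ∀ x, x ∈ L k → x ∈ L k' → False := by
    intro k k' hne x hx hx'
    obtain ⟨p, q, ⟨⟨hc, _⟩, hval⟩⟩ := (hLmem k x).1 hx
    obtain ⟨p', q', ⟨⟨hc', _⟩, hval'⟩⟩ := (hLmem k' x).1 hx'
    have hp : p = p' := by
      by_contra hpp
      exact hAd p p' hpp x hc.1 hc'.1
    have hq : q = q' := by
      by_contra hqq
      exact hBd q q' hqq x hc.2 hc'.2
    rw [← hp, ← hq] at hval'
    rw [hval] at hval'
    exact hne hval'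
  have hLcov : ∀ x, x ∉ V → ∃ k, x ∈ L k := by
    intro x hxV
    obtain ⟨p, hp⟩ := hAc x
    obtain ⟨q, hq⟩ := hBc x
    exact ⟨(ρ p q x).2, (hLmem _ x).2 ⟨p, q, ⟨⟨hp, hq⟩, hxV⟩, rfl⟩⟩
  -- uncountability of slices
  have hslice : ∀ p q (k : ℤ), ¬(A p ∩ B q).Countable →
      ¬(((A p ∩ B q) \ V) ∩ {x | (ρ p q x).2 = k}).Countable := by
    intro p q k h hc
    have bij := hρbij p q h
    have hsub : {z : ℝ × ℤ | z.2 = k} ⊆ ρ p q '' (((A p ∩ B q) \ V) ∩ {x | (ρ p q x).2 = k}) := by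
      intro z hz
      obtain ⟨x, hx, hxz⟩ := bij.surjOn (mem_univ z)
      refine ⟨x, ⟨hx, ?_⟩, hxz⟩
      show (ρ p q x).2 = k
      rw [hxz]
      exact hz
    exact not_countable_sections ((hc.image _).mono hsub)
  -- nonemptiness transfer off V
  have hemptyV : ∀ p, (A p \ V = ∅) ↔ (B p \ V = ∅) := by
    intro p
    rw [diff_eq_empty, diff_eq_empty]
    constructor
    · intro h
      exact hBsubV p ((hAB_count p).1 (hVc.mono h))
    · intro h
      exact hAsubV p ((hAB_count p).2 (hVc.mono h))
  -- uncountability of the pieces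
  have huu_unc : ∀ p (k : ℤ), (A p \ V).Nonempty → ¬((A p \ V) ∩ L k).Countable := by
    rintro p k ⟨x, hx⟩ hc
    obtain ⟨q, hq⟩ := hBc x
    have hCunc : ¬(A p ∩ B q).Countable := fun h => hx.2 (hcell_subV p q h ⟨hx.1, hq⟩)
    apply hslice p q k hCunc
    refine hc.mono ?_
    rintro y ⟨⟨⟨hyA, hyB⟩, hyV⟩, hyval⟩
    exact ⟨⟨hyA, hyV⟩, (hLmem k y).2 ⟨p, q, ⟨⟨hyA, hyB⟩, hyV⟩, hyval⟩⟩
  have hvv_unc : ∀ p (k : ℤ), (B p \ V).Nonempty → ¬((B p \ V) ∩ L k).Countable := by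
    rintro p k ⟨x, hx⟩ hc
    obtain ⟨q, hq⟩ := hAc x
    have hCunc : ¬(A q ∩ B p).Countable := fun h => hx.2 (hcell_subV q p h ⟨hq, hx.1⟩)
    apply hslice q p k hCunc
    refine hc.mono ?_
    rintro y ⟨⟨⟨hyA, hyB⟩, hyV⟩, hyval⟩
    exact ⟨⟨hyB, hyV⟩, (hLmem k y).2 ⟨q, p, ⟨⟨hyA, hyB⟩, hyV⟩, hyval⟩⟩
  -- the partial maps on the uncountable part
  have hpiece : ∀ p (k : ℤ), ∃ g h : X → X, Measurable g ∧ Measurable h ∧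
      (∀ x ∈ (A p \ V) ∩ L k, g x ∈ (B p \ V) ∩ L (k + 1)) ∧
      (∀ y ∈ (B p \ V) ∩ L (k + 1), h y ∈ (A p \ V) ∩ L k) ∧
      (∀ x ∈ (A p \ V) ∩ L k, h (g x) = x) ∧
      (∀ y ∈ (B p \ V) ∩ L (k + 1), g (h y) = y) := by
    intro p k
    by_cases hne : A p \ V = ∅
    · have hneB : B p \ V = ∅ := (hemptyV p).1 hne
      refine ⟨id, id, measurable_id, measurable_id, ?_, ?_, ?_, ?_⟩ <;> intro x hx
      · rw [hne] at hx
        exact absurd hx.1 (notMem_empty x)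
      · rw [hneB] at hx
        exact absurd hx.1 (notMem_empty x)
      · rfl
      · rfl
    · have hneB : ¬(B p \ V = ∅) := fun h => hne ((hemptyV p).2 h)
      have h1 : ¬((A p \ V) ∩ L k).Countable :=
        huu_unc p k (nonempty_iff_ne_empty.2 hne)
      have h2 : ¬((B p \ V) ∩ L (k + 1)).Countable :=
        hvv_unc p (k + 1) (nonempty_iff_ne_empty.2 hneB)
      have hm1 : MeasurableSet ((A p \ V) ∩ L k) := ((hAm p).diff hVm).inter (hLm k)
      have hm2 : MeasurableSet ((B p \ V) ∩ L (k + 1)) := ((hBm p).diff hVm).inter (hLm (k + 1))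
      haveI := hm1.standardBorel
      haveI := hm2.standardBorel
      have hnc1 : ¬Countable (↥((A p \ V) ∩ L k)) := by rwa [Set.countable_coe_iff]
      have hnc2 : ¬Countable (↥((B p \ V) ∩ L (k + 1))) := by rwa [Set.countable_coe_iff]
      have ψ := PolishSpace.measurableEquivOfNotCountable hnc1 hnc2
      refine ⟨fun x => if h : x ∈ (A p \ V) ∩ L k then (ψ ⟨x, h⟩ : X) else x,
              fun y => if h : y ∈ (B p \ V) ∩ L (k + 1) then (ψ.symm ⟨y, h⟩ : X) else y,
              measurable_extend_id hm1 (measurable_subtype_coe.comp ψ.measurable),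
              measurable_extend_id hm2 (measurable_subtype_coe.comp ψ.symm.measurable),
              ?_, ?_, ?_, ?_⟩
      · intro x hx
        beta_reduce
        rw [dif_pos hx]
        exact (ψ ⟨x, hx⟩).2
      · intro y hy
        beta_reduce
        rw [dif_pos hy]
        exact (ψ.symm ⟨y, hy⟩).2
      · intro x hx
        beta_reduce
        rw [dif_pos hx, dif_pos (ψ ⟨x, hx⟩).2]
        have h1 : (⟨(ψ ⟨x, hx⟩ : X), (ψ ⟨x, hx⟩).2⟩ : ↥((B p \ V) ∩ L (k + 1))) = ψ ⟨x, hx⟩ :=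
          Subtype.ext rfl
        rw [h1, ψ.symm_apply_apply]
      · intro y hy
        beta_reduce
        rw [dif_pos hy, dif_pos (ψ.symm ⟨y, hy⟩).2]
        have h1 : (⟨(ψ.symm ⟨y, hy⟩ : X), (ψ.symm ⟨y, hy⟩).2⟩ : ↥((A p \ V) ∩ L k)) =
            ψ.symm ⟨y, hy⟩ := Subtype.ext rfl
        rw [h1, ψ.apply_symm_apply]
  choose gU hU hgUm hhUm hgUv hhUu hgUl hgUr using hpiece
  -- the partial maps on the countable part
  have hcpiece : ∀ p, ∃ g h : X → X, Measurable g ∧ Measurable h ∧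
      (∀ x ∈ A p ∩ V, g x ∈ B p ∩ V) ∧ (∀ y ∈ B p ∩ V, h y ∈ A p ∩ V) ∧
      (∀ x ∈ A p ∩ V, h (g x) = x) ∧ (∀ y ∈ B p ∩ V, g (h y) = y) := by
    intro p
    obtain ⟨e⟩ := hVpiece p
    refine ⟨fun x => if h : x ∈ A p ∩ V then (e ⟨x, h⟩ : X) else x,
            fun y => if h : y ∈ B p ∩ V then (e.symm ⟨y, h⟩ : X) else y,
            measurable_of_eq_id_off_countable (hVc.mono inter_subset_right)
              (fun x hx => dif_neg hx),
            measurable_of_eq_id_off_countable (hVc.mono inter_subset_right)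
              (fun x hx => dif_neg hx),
            ?_, ?_, ?_, ?_⟩
    · intro x hx
      beta_reduce
      rw [dif_pos hx]
      exact (e ⟨x, hx⟩).2
    · intro y hy
      beta_reduce
      rw [dif_pos hy]
      exact (e.symm ⟨y, hy⟩).2
    · intro x hx
      beta_reduce
      rw [dif_pos hx, dif_pos (e ⟨x, hx⟩).2]
      have h1 : (⟨(e ⟨x, hx⟩ : X), (e ⟨x, hx⟩).2⟩ : ↥(B p ∩ V)) = e ⟨x, hx⟩ := Subtype.ext rfl
      rw [h1, e.symm_apply_apply]
    · intro y hy
      beta_reduce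
      rw [dif_pos hy, dif_pos (e.symm ⟨y, hy⟩).2]
      have h1 : (⟨(e.symm ⟨y, hy⟩ : X), (e.symm ⟨y, hy⟩).2⟩ : ↥(A p ∩ V)) = e.symm ⟨y, hy⟩ :=
        Subtype.ext rfl
      rw [h1, e.apply_symm_apply]
  choose gC hC hgCm hhCm hgCv hhCu hgCl hgCr using hcpiece
  -- glue everything
  obtain ⟨S, hS1, hS2⟩ := glue_equiv
    (I := P ⊕ (P × ℤ))
    (fun i => Sum.rec (fun p => A p ∩ V) (fun pk => (A pk.1 \ V) ∩ L pk.2) i)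
    (fun i => Sum.rec (fun p => B p ∩ V) (fun pk => (B pk.1 \ V) ∩ L (pk.2 + 1)) i)
    (by
      rintro (p | ⟨p, k⟩)
      · exact (hAm p).inter hVm
      · exact ((hAm p).diff hVm).inter (hLm k))
    (by
      rintro (p | ⟨p, k⟩)
      · exact (hBm p).inter hVm
      · exact ((hBm p).diff hVm).inter (hLm (k + 1)))
    (by
      rintro (p | ⟨p, k⟩) (p' | ⟨p', k'⟩) hne x hx hx'
      · exact hAd p p' (fun h => hne (by rw [h])) x hx.1 hx'.1
      · exact hx'.1.2 hx.2
      · exact hx.1.2 hx'.2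
      · by_cases hp : p = p'
        · subst hp
          have hk : k ≠ k' := fun h => hne (by rw [h])
          exact hLd k k' hk x hx.2 hx'.2
        · exact hAd p p' hp x hx.1.1 hx'.1.1)
    (by
      rintro (p | ⟨p, k⟩) (p' | ⟨p', k'⟩) hne x hx hx'
      · exact hBd p p' (fun h => hne (by rw [h])) x hx.1 hx'.1
      · exact (hLnotV _ x hx'.2) hx.2
      · exact (hLnotV _ x hx.2) hx'.2
      · by_cases hp : p = p'
        · subst hp
          have hk : k + 1 ≠ k' + 1 := fun h => hne (by rw [show k = k' by omega])
          exact hLd (k + 1) (k' + 1) hk x hx.2 hx'.2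
        · exact hBd p p' hp x hx.1.1 hx'.1.1)
    (by
      intro x
      by_cases hxV : x ∈ V
      · obtain ⟨p, hp⟩ := hAc x
        exact ⟨Sum.inl p, hp, hxV⟩
      · obtain ⟨p, hp⟩ := hAc x
        obtain ⟨k, hk⟩ := hLcov x hxV
        exact ⟨Sum.inr (p, k), ⟨hp, hxV⟩, hk⟩)
    (by
      intro y
      by_cases hyV : y ∈ V
      · obtain ⟨p, hp⟩ := hBc y
        exact ⟨Sum.inl p, hp, hyV⟩
      · obtain ⟨p, hp⟩ := hBc y
        obtain ⟨k, hk⟩ := hLcov y hyV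
        refine ⟨Sum.inr (p, k - 1), ⟨hp, hyV⟩, ?_⟩
        show y ∈ L (k - 1 + 1)
        rwa [sub_add_cancel])
    (fun i => Sum.rec (fun p => gC p) (fun pk => gU pk.1 pk.2) i)
    (fun i => Sum.rec (fun p => hC p) (fun pk => hU pk.1 pk.2) i)
    (by
      rintro (p | ⟨p, k⟩)
      · exact hgCm p
      · exact hgUm p k)
    (by
      rintro (p | ⟨p, k⟩)
      · exact hhCm p
      · exact hhUm p k)
    (by
      rintro (p | ⟨p, k⟩)
      · exact hgCv p
      · exact hgUv p k)
    (by
      rintro (p | ⟨p, k⟩)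
      · exact hhCu p
      · exact hhUu p k)
    (by
      rintro (p | ⟨p, k⟩)
      · exact hgCl p
      · exact hgUl p k)
    (by
      rintro (p | ⟨p, k⟩)
      · exact hgCr p
      · exact hgUr p k)
  -- image identities
  have hS2l : ∀ p, S '' (A p ∩ V) = B p ∩ V := fun p => hS2 (Sum.inl p)
  have hS2r : ∀ p k, S '' ((A p \ V) ∩ L k) = (B p \ V) ∩ L (k + 1) :=
    fun p k => hS2 (Sum.inr (p, k))
  have himage : ∀ p, S '' A p = B p := by
    intro p
    have h1 : A p = (A p ∩ V) ∪ (A p \ V) := (inter_union_diff _ _).symm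
    have h2 : A p \ V = ⋃ k : ℤ, (A p \ V) ∩ L k := by
      apply Subset.antisymm
      · intro x hx
        obtain ⟨k, hk⟩ := hLcov x hx.2
        exact mem_iUnion.2 ⟨k, hx, hk⟩
      · exact iUnion_subset fun k => inter_subset_left
    have h3 : B p \ V = ⋃ k : ℤ, (B p \ V) ∩ L (k + 1) := by
      apply Subset.antisymm
      · intro y hy
        obtain ⟨k, hk⟩ := hLcov y hy.2
        refine mem_iUnion.2 ⟨k - 1, hy, ?_⟩
        show y ∈ L (k - 1 + 1)
        rwa [sub_add_cancel]
      · exact iUnion_subset fun k => inter_subset_left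
    calc S '' A p = S '' (A p ∩ V) ∪ S '' (A p \ V) := by rw [← image_union, ← h1]
    _ = (B p ∩ V) ∪ S '' (⋃ k : ℤ, (A p \ V) ∩ L k) := by rw [hS2l, ← h2]
    _ = (B p ∩ V) ∪ ⋃ k : ℤ, S '' ((A p \ V) ∩ L k) := by rw [image_iUnion]
    _ = (B p ∩ V) ∪ ⋃ k : ℤ, (B p \ V) ∩ L (k + 1) := by
          congr 1
          exact iUnion_congr fun k => hS2r p k
    _ = (B p ∩ V) ∪ (B p \ V) := by rw [← h3]
    _ = B p := inter_union_diff _ _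
  -- invariance
  have hSV : ∀ x ∈ V, S x ∈ V := by
    intro x hx
    obtain ⟨p, hp⟩ := hAc x
    have : S x ∈ B p ∩ V := by
      rw [← hS2l p]
      exact mem_image_of_mem S ⟨hp, hx⟩
    exact this.2
  have hSV' : ∀ x ∈ V, S.symm x ∈ V := by
    intro x hx
    obtain ⟨p, hp⟩ := hBc x
    have hxv : x ∈ B p ∩ V := ⟨hp, hx⟩
    rw [← hS2l p] at hxv
    obtain ⟨z, hz, hzx⟩ := hxv
    have hsz : S.symm x = z := by
      rw [← hzx]
      exact S.symm_apply_apply z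
    rw [hsz]
    exact hz.2
  have hSL : ∀ (k : ℤ), ∀ x ∈ L k, S x ∈ L (k + 1) := by
    intro k x hx
    obtain ⟨p, hp⟩ := hAc x
    have : S x ∈ (B p \ V) ∩ L (k + 1) := by
      rw [← hS2r p k]
      exact mem_image_of_mem S ⟨⟨hp, hLnotV k x hx⟩, hx⟩
    exact this.2
  have hSL' : ∀ (k : ℤ), ∀ x ∈ L k, S.symm x ∈ L (k - 1) := by
    intro k x hx
    obtain ⟨p, hp⟩ := hBc x
    have hxv : x ∈ (B p \ V) ∩ L (k - 1 + 1) := by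
      rw [sub_add_cancel]
      exact ⟨⟨hp, hLnotV k x hx⟩, hx⟩
    rw [← hS2r p (k - 1)] at hxv
    obtain ⟨z, hz, hzx⟩ := hxv
    have hsz : S.symm x = z := by
      rw [← hzx]
      exact S.symm_apply_apply z
    rw [hsz]
    exact hz.2
  obtain ⟨Aset, hAsetm, hAset⟩ := smooth_of_invariant_graded S V L hVc hLm hLnotV hLd hLcov
    hSV hSV' hSL hSL'
  exact ⟨S, ⟨Aset, hAsetm, hAset⟩, himage⟩

/-- **Smooth automorphisms are weakly dense.** For every Borel automorphism `T` of a
standard Borel space and every finite list of Borel sets `F₁, …, Fₙ` there is a smooth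
Borel automorphism `S` (one admitting a Borel set meeting every `S`-orbit exactly once)
with `S(Fᵢ) = T(Fᵢ)` for all `i`. -/
theorem stmt_4 {X : Type*} [MeasurableSpace X] [StandardBorelSpace X]
    (T : X ≃ᵐ X) (n : ℕ) (F : Fin n → Set X) (hF : ∀ i, MeasurableSet (F i)) :
    ∃ S : X ≃ᵐ X,
      (∃ A : Set X, MeasurableSet A ∧
        ∀ x : X, ∃! y : X, y ∈ A ∧ ∃ k : ℤ, (S.toEquiv ^ k) x = y) ∧
      (∀ i, (S : X → X) '' F i = (T : X → X) '' F i) := by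
  classical
  set A : (Fin n → Bool) → Set X := fun p => ⋂ i, if p i then F i else (F i)ᶜ with hAdef
  have hmemA : ∀ (x : X) (p : Fin n → Bool),
      x ∈ A p ↔ ∀ i, x ∈ (if p i then F i else (F i)ᶜ) := by
    intro x p
    rw [hAdef]
    exact mem_iInter
  have hAm : ∀ p, MeasurableSet (A p) := by
    intro p
    refine MeasurableSet.iInter fun i => ?_
    by_cases h : p i <;> simp [h, hF i, (hF i).compl]
  have hpattern : ∀ x : X, x ∈ A (fun i => decide (x ∈ F i)) := by
    intro x
    rw [hmemA]
    intro i
    by_cases h : x ∈ F i <;> simp [h]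
  have hAd : ∀ p q, p ≠ q → ∀ x, x ∈ A p → x ∈ A q → False := by
    intro p q hne x hx hy
    apply hne
    funext i
    have h1 := (hmemA x p).1 hx i
    have h2 := (hmemA x q).1 hy i
    by_cases hp : p i <;> by_cases hq : q i <;> simp [hp, hq] at h1 h2 ⊢
    · exact h2 h1
    · exact h1 h2
  have hAc : ∀ x : X, ∃ p, x ∈ A p := fun x => ⟨_, hpattern x⟩
  set B : (Fin n → Bool) → Set X := fun p => (T : X → X) '' A p with hBdef
  have hBm : ∀ p, MeasurableSet (B p) := fun p =>
    (MeasurableEquiv.measurableSet_image T).2 (hAm p)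
  have hBd : ∀ p q, p ≠ q → ∀ x, x ∈ B p → x ∈ B q → False := by
    rintro p q hne x ⟨a, ha, hax⟩ ⟨b, hb, hbx⟩
    have hab : a = b := T.injective (hax.trans hbx.symm)
    exact hAd p q hne a ha (hab ▸ hb)
  have hBc : ∀ x : X, ∃ p, x ∈ B p := by
    intro x
    obtain ⟨p, hp⟩ := hAc (T.symm x)
    exact ⟨p, T.symm x, hp, T.apply_symm_apply x⟩
  have heq : ∀ p, Nonempty ((A p : Set X) ≃ (B p : Set X)) :=
    fun p => ⟨Equiv.Set.image (T : X → X) (A p) T.injective⟩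
  obtain ⟨S, hsmooth, himg⟩ := smooth_core A B hAm hBm hAd hBd hAc hBc heq
  refine ⟨S, hsmooth, ?_⟩
  intro i
  have hFdecomp : F i = ⋃ p : {p : Fin n → Bool // p i = true}, A p.1 := by
    apply Subset.antisymm
    · intro x hx
      exact mem_iUnion.2 ⟨⟨fun j => decide (x ∈ F j), by simp [hx]⟩, hpattern x⟩
    · intro x hx
      obtain ⟨⟨p, hpi⟩, hp⟩ := mem_iUnion.1 hx
      have hmem := (hmemA x p).1 hp i
      rw [hpi] at hmem
      simpa using hmem
  rw [hFdecomp, image_iUnion, image_iUnion]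
  exact iUnion_congr fun p => himg p.1
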